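/- arXiv:1401.0231 — 4 statements merged into one kernel-verified Lean document; each statement's English description precedes it below -/
import Mathlib

section
/- Let d ≥ 1, k ∈ {1,...,d-1}, and 0 < α < 1. Suppose E ⊂ ℝ^d is a set such that for every x ∈ E there exist a (d-k)-dimensional linear subspace V of ℝ^d, a unit vector θ ∈ S^{d-1}, and r > 0 with E ∩ X(x,r,V,α) \ H(x,θ,α) = ∅, where X(x,r,V,α) = { y ∈ B(x,r) : dist(y-x,V) < α|y-x| } and H(x,θ,α) = { y ∈ ℝ^d : (y-x)·θ ≥ α|y-x| }, and where V, θ, α, r are the same for all x ∈ E. Then E is contained in the image of a single Lipschitz map from a subset of the orthogonal complement V^⊥ (a k-dimensional subspace) into ℝ^d; in particular E is covered by countably many Lipschitz images of ℝ^k. -/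
open MeasureTheory Metric Set
open scoped ENNReal NNReal RealInnerProductSpace

noncomputable section

set_option maxHeartbeats 1000000

/-- The open cone `X(x,r,V,α) = {y ∈ B(x,r) : dist(y-x,V) < α|y-x|}`. -/
def coneX (d : ℕ) (x : EuclideanSpace ℝ (Fin d)) (r : ℝ)
    (V : Submodule ℝ (EuclideanSpace ℝ (Fin d))) (α : ℝ) : Set (EuclideanSpace ℝ (Fin d)) :=
  {y | y ∈ Metric.ball x r ∧ Metric.infDist (y - x) (V : Set (EuclideanSpace ℝ (Fin d))) < α * ‖y - x‖}

/-- The closed cone `H(x,θ,α) = {y : (y-x)·θ ≥ α|y-x|}`. -/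
def coneH (d : ℕ) (x θ : EuclideanSpace ℝ (Fin d)) (α : ℝ) : Set (EuclideanSpace ℝ (Fin d)) :=
  {y | α * ‖y - x‖ ≤ ⟪y - x, θ⟫}

/-- Rectifiability criterion: if the cone `X(x,r,V,α) \ H(x,θ,α)` misses `E` for every `x ∈ E`
(with the same `V`, `θ`, `α`, `r` for all `x`), then `E` is the image of a single Lipschitz map
defined on a subset of the `k`-dimensional subspace `Vᗮ`; in particular `E` is covered by
countably many Lipschitz images of `ℝ^k`, i.e. `E` is strongly `k`-rectifiable. -/
theorem rectifiability_criterion (d k : ℕ) (hd : 1 ≤ d) (hk1 : 1 ≤ k) (hk2 : k ≤ d - 1)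
    (α : ℝ) (hα0 : 0 < α) (hα1 : α < 1)
    (E : Set (EuclideanSpace ℝ (Fin d)))
    (V : Submodule ℝ (EuclideanSpace ℝ (Fin d))) (hV : Module.finrank ℝ V = d - k)
    (θ : EuclideanSpace ℝ (Fin d)) (hθ : ‖θ‖ = 1) (r : ℝ) (hr : 0 < r)
    (hE : ∀ x ∈ E, E ∩ (coneX d x r V α \ coneH d x θ α) = ∅) :
    (∃ (K : ℝ≥0) (f : Vᗮ → EuclideanSpace ℝ (Fin d)) (s : Set Vᗮ),
      LipschitzOnWith K f s ∧ E ⊆ f '' s) ∧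
    ∃ g : ℕ → (EuclideanSpace ℝ (Fin k) → EuclideanSpace ℝ (Fin d)),
      (∀ n, ∃ K : ℝ≥0, LipschitzWith K (g n)) ∧ E ⊆ ⋃ n, Set.range (g n) := by
  classical
  set Q := Submodule.orthogonalProjectionOnto Vᗮ with hQdef
  have hVne : ((V : Set (EuclideanSpace ℝ (Fin d)))).Nonempty := ⟨0, V.zero_mem⟩
  have hQle : ∀ z : EuclideanSpace ℝ (Fin d), ‖Q z‖ ≤ ‖z‖ := by
    intro z
    have h1 := (Submodule.orthogonalProjectionOnto Vᗮ).le_opNorm z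
    have h2 := Submodule.orthogonalProjectionOnto_norm_le Vᗮ
    have h3 := norm_nonneg z
    calc ‖Q z‖ ≤ ‖Submodule.orthogonalProjectionOnto Vᗮ‖ * ‖z‖ := h1
      _ ≤ 1 * ‖z‖ := by nlinarith
      _ = ‖z‖ := one_mul _
  have hcoe : ∀ u : ↥(Vᗮ), ‖(u : EuclideanSpace ℝ (Fin d))‖ = ‖u‖ := fun u => rfl
  have infD : ∀ z : EuclideanSpace ℝ (Fin d),
      Metric.infDist z (V : Set (EuclideanSpace ℝ (Fin d))) = ‖Q z‖ := by
    intro z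
    apply le_antisymm
    · have hm : ((Submodule.orthogonalProjectionOnto V z : EuclideanSpace ℝ (Fin d))) ∈
          (V : Set (EuclideanSpace ℝ (Fin d))) := (Submodule.orthogonalProjectionOnto V z).2
      have h := Metric.infDist_le_dist_of_mem (x := z) hm
      rw [dist_eq_norm] at h
      calc Metric.infDist z (V : Set (EuclideanSpace ℝ (Fin d)))
          ≤ ‖z - Submodule.orthogonalProjectionOnto V z‖ := h
        _ = ‖(Q z : EuclideanSpace ℝ (Fin d))‖ := by
            rw [hQdef, Submodule.orthogonalProjectionOnto_orthogonal]; rfl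
        _ = ‖Q z‖ := hcoe _
    · by_contra hlt
      push_neg at hlt
      obtain ⟨w, hw, hdw⟩ := (Metric.infDist_lt_iff hVne).1 hlt
      have hle : ‖Q z‖ ≤ dist z w := by
        rw [dist_eq_norm]
        calc ‖Q z‖ = ‖Q (z - w)‖ := by
              rw [map_sub, Submodule.orthogonalProjectionOnto_apply_of_mem_orthogonal (Submodule.le_orthogonal_orthogonal V hw),
                sub_zero]
          _ ≤ ‖z - w‖ := hQle _
      linarith
  have key : ∀ x ∈ E, ∀ y ∈ E, ‖x - y‖ < r → α * ‖x - y‖ ≤ ‖Q x - Q y‖ := by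
    intro x hx y hy hlt
    by_contra hcon
    push_neg at hcon
    have hxy : x ≠ y := by
      rintro rfl
      rw [sub_self, sub_self, norm_zero, norm_zero, mul_zero] at hcon
      exact lt_irrefl 0 hcon
    have hnorm_pos : 0 < ‖x - y‖ := by
      rw [norm_sub_pos_iff]; exact sub_ne_zero.mp (sub_ne_zero.mpr hxy)
    have hQxy : ‖Q (x - y)‖ < α * ‖x - y‖ := by rwa [map_sub]
    have hyX : y ∈ coneX d x r V α := by
      simp only [coneX, Set.mem_setOf_eq]
      constructor
      · rw [Metric.mem_ball, dist_eq_norm, norm_sub_rev]; exact hlt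
      · rw [infD, map_sub, norm_sub_rev (Q y), norm_sub_rev y]
        rwa [map_sub] at hQxy
    have hyH : y ∈ coneH d x θ α := by
      by_contra hne
      have hmem : y ∈ E ∩ (coneX d x r V α \ coneH d x θ α) := ⟨hy, hyX, hne⟩
      rw [hE x hx] at hmem
      exact hmem
    have hxX : x ∈ coneX d y r V α := by
      simp only [coneX, Set.mem_setOf_eq]
      constructor
      · rw [Metric.mem_ball, dist_eq_norm]; exact hlt
      · rw [infD, map_sub]; exact hcon
    have hxH : x ∈ coneH d y θ α := by
      by_contra hne
      have hmem : x ∈ E ∩ (coneX d y r V α \ coneH d y θ α) := ⟨hx, hxX, hne⟩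
      rw [hE y hy] at hmem
      exact hmem
    have h1 : α * ‖y - x‖ ≤ ⟪y - x, θ⟫ := hyH
    have h2 : α * ‖x - y‖ ≤ ⟪x - y, θ⟫ := hxH
    have h3 : ⟪y - x, θ⟫ + ⟪x - y, θ⟫ = (0 : ℝ) := by
      rw [← inner_add_left]
      have : (y - x) + (x - y) = (0 : EuclideanSpace ℝ (Fin d)) := by abel
      rw [this, inner_zero_left]
    rw [norm_sub_rev] at h1
    nlinarith
  -- dimension of the orthogonal complement
  have hVbot : Module.finrank ℝ ↥(Vᗮ) = k := by
    have h := Submodule.finrank_add_finrank_orthogonal V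
    rw [hV, finrank_euclideanSpace_fin] at h
    omega
  have B : OrthonormalBasis (Fin k) ℝ ↥(Vᗮ) :=
    (stdOrthonormalBasis ℝ ↥(Vᗮ)).reindex (finCongr hVbot)
  obtain ⟨e, he⟩ : ∃ e : ↥(Vᗮ), ‖e‖ = 1 := ⟨B ⟨0, hk1⟩, B.orthonormal.1 _⟩
  obtain ⟨c, hc⟩ := TopologicalSpace.exists_dense_seq (EuclideanSpace ℝ (Fin d))
  set Es : ℕ → Set (EuclideanSpace ℝ (Fin d)) := fun n => E ∩ Metric.closedBall (c n) (r / 3)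
    with hEsdef
  have cover : ∀ x ∈ E, ∃ n, x ∈ Es n := by
    intro x hx
    obtain ⟨n, hn⟩ := hc.exists_dist_lt x (by positivity : (0 : ℝ) < r / 3)
    exact ⟨n, hx, Metric.mem_closedBall.2 hn.le⟩
  have hdiam : ∀ n, ∀ x ∈ Es n, ∀ y ∈ Es n, ‖x - y‖ < r := by
    intro n x hxn y hyn
    have h1 : dist x (c n) ≤ r / 3 := Metric.mem_closedBall.1 hxn.2
    have h2 : dist y (c n) ≤ r / 3 := Metric.mem_closedBall.1 hyn.2
    have h3 := dist_triangle x (c n) y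
    have h4 : dist (c n) y = dist y (c n) := dist_comm _ _
    rw [← dist_eq_norm]
    linarith
  set a : ℕ → ℝ := fun n => ‖c n‖ + r with hadef
  have ha0 : ∀ n, 0 ≤ a n := by
    intro n; simp only [hadef]; positivity
  set b : ℕ → ℝ := fun n => a n + a (n + 1) + 2 * r + 1 with hbdef
  have hb0 : ∀ n, 0 ≤ b n := by
    intro n
    have := ha0 n; have := ha0 (n + 1)
    simp only [hbdef]; linarith
  set T : ℕ → ℝ := fun n => ∑ i ∈ Finset.range n, b i with hTdef
  have sep : ∀ n m : ℕ, n < m → a n + a m + 2 * r + 1 ≤ T m - T n := by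
    intro n m hnm
    have hs := Finset.sum_range_add_sum_Ico b (le_of_lt hnm)
    have hIco : a n + a m + 2 * r + 1 ≤ ∑ i ∈ Finset.Ico n m, b i := by
      rcases eq_or_lt_of_le (Nat.succ_le_of_lt hnm) with h1 | h1
      · rw [← h1, Nat.Ico_succ_singleton, Finset.sum_singleton]
      · have hsub : ({n, m - 1} : Finset ℕ) ⊆ Finset.Ico n m := by
          intro i hi
          simp only [Finset.mem_insert, Finset.mem_singleton] at hi
          rcases hi with rfl | rfl <;> (rw [Finset.mem_Ico]; omega)
        have hle := Finset.sum_le_sum_of_subset_of_nonneg hsub (fun i _ _ => hb0 i)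
        rw [Finset.sum_pair (show n ≠ m - 1 by omega)] at hle
        have hm1 : m - 1 + 1 = m := by omega
        have e2 : b (m - 1) = a (m - 1) + a m + 2 * r + 1 := by
          simp only [hbdef]; rw [hm1]
        have h5 := ha0 (n + 1); have h6 := ha0 (m - 1)
        have e1 : b n = a n + a (n + 1) + 2 * r + 1 := rfl
        linarith
    have hTn : T n = ∑ i ∈ Finset.range n, b i := rfl
    have hTm : T m = ∑ i ∈ Finset.range m, b i := rfl
    linarith [hs, hIco]
  have hnormx : ∀ n, ∀ x ∈ Es n, ‖x‖ ≤ a n := by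
    intro n x hx
    have h1 : ‖x - c n‖ ≤ r / 3 := by
      rw [← dist_eq_norm]; exact Metric.mem_closedBall.1 hx.2
    have h2 : ‖x‖ ≤ ‖c n‖ + ‖x - c n‖ := by
      calc ‖x‖ = ‖c n + (x - c n)‖ := by rw [add_sub_cancel]
        _ ≤ ‖c n‖ + ‖x - c n‖ := norm_add_le _ _
    simp only [hadef]
    linarith
  set pl : ℕ → EuclideanSpace ℝ (Fin d) → ↥(Vᗮ) :=
    fun n x => (Q x - Q (c n)) + (T n) • e with hpldef
  have hQ1 : ∀ z w : EuclideanSpace ℝ (Fin d), ‖Q z - Q w‖ ≤ ‖z - w‖ := by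
    intro z w
    rw [← map_sub]
    exact hQle _
  have cross : ∀ n m x y, x ∈ Es n → y ∈ Es m → n < m →
      ‖x - y‖ + 1 ≤ ‖pl n x - pl m y‖ := by
    intro n m x y hx hy hnm
    have h1 : ‖Q x - Q (c n)‖ ≤ r / 3 := by
      refine (hQ1 x (c n)).trans ?_
      rw [← dist_eq_norm]; exact Metric.mem_closedBall.1 hx.2
    have h2 : ‖Q y - Q (c m)‖ ≤ r / 3 := by
      refine (hQ1 y (c m)).trans ?_
      rw [← dist_eq_norm]; exact Metric.mem_closedBall.1 hy.2
    have hTm := sep n m hnm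
    have heq : (Q y - Q (c m)) - (Q x - Q (c n)) + (pl n x - pl m y) = (T n - T m) • e := by
      simp only [hpldef]
      rw [sub_smul]
      abel
    have h3 : T m - T n ≤ ‖Q y - Q (c m)‖ + ‖Q x - Q (c n)‖ + ‖pl n x - pl m y‖ := by
      have hTnm : T n - T m ≤ 0 := by linarith [ha0 n, ha0 m]
      have hnorm : ‖(T n - T m) • e‖ = T m - T n := by
        rw [norm_smul, he, Real.norm_eq_abs, abs_of_nonpos hTnm, mul_one]
        ring
      calc T m - T n = ‖(T n - T m) • e‖ := hnorm.symm
        _ = ‖(Q y - Q (c m)) - (Q x - Q (c n)) + (pl n x - pl m y)‖ := by rw [heq]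
        _ ≤ ‖(Q y - Q (c m)) - (Q x - Q (c n))‖ + ‖pl n x - pl m y‖ := norm_add_le _ _
        _ ≤ ‖Q y - Q (c m)‖ + ‖Q x - Q (c n)‖ + ‖pl n x - pl m y‖ := by
            linarith [norm_sub_le (Q y - Q (c m)) (Q x - Q (c n))]
    have h4 : ‖x - y‖ ≤ ‖x‖ + ‖y‖ := norm_sub_le x y
    have h5 := hnormx n x hx
    have h6 := hnormx m y hy
    linarith
  have uniq : ∀ n m x y, x ∈ Es n → y ∈ Es m → pl n x = pl m y → n = m ∧ x = y := by
    intro n m x y hx hy hpq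
    have hnm : n = m := by
      by_contra hne
      rcases Nat.lt_or_ge n m with h | h
      · have hcr := cross n m x y hx hy h
        rw [hpq, sub_self, norm_zero] at hcr
        nlinarith [norm_nonneg (x - y)]
      · have h' : m < n := by omega
        have hcr := cross m n y x hy hx h'
        rw [← hpq, sub_self, norm_zero] at hcr
        nlinarith [norm_nonneg (y - x)]
    subst hnm
    refine ⟨rfl, ?_⟩
    have hq : Q x = Q y := by
      have h0 : Q x - Q (c n) = Q y - Q (c n) := by
        have := hpq
        simp only [hpldef, add_left_inj] at this
        exact this
      exact sub_left_inj.mp h0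
    have hk := key x hx.1 y hy.1 (hdiam n x hx y hy)
    rw [hq, sub_self, norm_zero] at hk
    have hle0 : ‖x - y‖ ≤ 0 := by nlinarith
    exact eq_of_sub_eq_zero (norm_le_zero_iff.1 hle0)
  obtain ⟨f, hf⟩ : ∃ f : ↥(Vᗮ) → EuclideanSpace ℝ (Fin d),
      ∀ n x, x ∈ Es n → f (pl n x) = x := by
    refine ⟨fun u =>
      if h : ∃ p : ℕ × EuclideanSpace ℝ (Fin d), p.2 ∈ Es p.1 ∧ pl p.1 p.2 = u
      then h.choose.2 else 0, fun n x hx => ?_⟩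
    have hex : ∃ p : ℕ × EuclideanSpace ℝ (Fin d), p.2 ∈ Es p.1 ∧ pl p.1 p.2 = pl n x :=
      ⟨(n, x), hx, rfl⟩
    simp only [dif_pos hex]
    obtain ⟨h1, h2⟩ := hex.choose_spec
    exact (uniq _ _ _ _ h1 hx h2).2
  set s : Set ↥(Vᗮ) := ⋃ n, pl n '' Es n with hsdef
  have hainv : 1 ≤ α⁻¹ := (one_le_inv₀ hα0).2 hα1.le
  have hK0 : (0 : ℝ) ≤ α⁻¹ := by positivity
  have hlip : LipschitzOnWith ⟨α⁻¹, hK0⟩ f s := by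
    apply LipschitzOnWith.of_dist_le_mul
    intro u hu v hv
    simp only [hsdef, Set.mem_iUnion] at hu hv
    obtain ⟨n, x, hx, rfl⟩ := hu
    obtain ⟨m, y, hy, rfl⟩ := hv
    rw [hf n x hx, hf m y hy, dist_eq_norm, dist_eq_norm]
    change ‖x - y‖ ≤ α⁻¹ * ‖pl n x - pl m y‖
    rcases eq_or_ne n m with rfl | hne
    · have hk := key x hx.1 y hy.1 (hdiam n x hx y hy)
      have hpl2 : pl n x - pl n y = Q x - Q y := by
        simp only [hpldef]; abel
      rw [hpl2]
      calc ‖x - y‖ = α⁻¹ * (α * ‖x - y‖) := by field_simp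
        _ ≤ α⁻¹ * ‖Q x - Q y‖ := by gcongr
    · rcases Nat.lt_or_ge n m with h | h
      · have hcr := cross n m x y hx hy h
        exact (le_trans (le_add_of_nonneg_right zero_le_one) hcr).trans
          (le_mul_of_one_le_left (norm_nonneg _) hainv)
      · have h' : m < n := by omega
        have hcr := cross m n y x hy hx h'
        rw [norm_sub_rev y x, norm_sub_rev (pl m y) (pl n x)] at hcr
        exact (le_trans (le_add_of_nonneg_right zero_le_one) hcr).trans
          (le_mul_of_one_le_left (norm_nonneg _) hainv)
  have hcov : E ⊆ f '' s := by
    intro x hx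
    obtain ⟨n, hn⟩ := cover x hx
    exact ⟨pl n x, Set.mem_iUnion.2 ⟨n, Set.mem_image_of_mem _ hn⟩, hf n x hn⟩
  refine ⟨⟨⟨α⁻¹, hK0⟩, f, s, hlip, hcov⟩, ?_⟩
  -- part 2: extend f to a global Lipschitz map and precompose with an isometry
  set J := EuclideanSpace.equiv (Fin d) ℝ with hJdef
  have hJf : LipschitzOnWith (‖(J : EuclideanSpace ℝ (Fin d) →L[ℝ] (Fin d → ℝ))‖₊ *
      ⟨α⁻¹, hK0⟩) (fun u => J (f u)) s :=
    (J.lipschitz).comp_lipschitzOnWith hlip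
  obtain ⟨g0, hg0lip, hg0eq⟩ := hJf.extend_pi
  set F : ↥(Vᗮ) → EuclideanSpace ℝ (Fin d) := fun u => J.symm (g0 u) with hFdef
  have hFlip : LipschitzWith (‖(J.symm : (Fin d → ℝ) →L[ℝ] EuclideanSpace ℝ (Fin d))‖₊ *
      (‖(J : EuclideanSpace ℝ (Fin d) →L[ℝ] (Fin d → ℝ))‖₊ * ⟨α⁻¹, hK0⟩)) F :=
    (J.symm.lipschitz).comp hg0lip
  have hEqOn : Set.EqOn f F s := by
    intro u hu
    simp only [hFdef]
    rw [← hg0eq hu]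
    simp
  have hEF : E ⊆ Set.range F := by
    intro x hx
    obtain ⟨u, hu, hux⟩ := hcov hx
    exact ⟨u, by rw [← hEqOn hu]; exact hux⟩
  refine ⟨fun _ => F ∘ (B.repr.symm), fun n => ⟨_, hFlip.comp B.repr.symm.isometry.lipschitz⟩, ?_⟩
  intro x hx
  refine Set.mem_iUnion.2 ⟨0, ?_⟩
  obtain ⟨u, hu⟩ := hEF hx
  obtain ⟨w, hw⟩ := B.repr.symm.surjective u
  exact ⟨w, by simp [Function.comp, hw, hu]⟩
end
end

section
/- Fix d ≥ 1, k ∈ {1,...,d-1}, 0 < α ≤ 1, and ε ≥ 0. The set A_ε of Borel probability measures ν on the closed unit ball B̄(0,1) ⊂ ℝ^d such that there exist a (d-k)-dimensional linear subspace V and a unit vector θ with ν(X(0,1,V,α) \ H(0,θ,α)) ≤ ε, is closed with respect to weak convergence of measures. -/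
open MeasureTheory Metric Set Filter Topology
open scoped ENNReal NNReal RealInnerProductSpace

noncomputable section

/-- Monotonicity of the truncated cone difference in the aperture parameter. -/
lemma coneDiff_mono {d : ℕ} {V : Submodule ℝ (EuclideanSpace ℝ (Fin d))}
    {θ : EuclideanSpace ℝ (Fin d)} {β β' : ℝ} (h : β ≤ β') :
    coneX d 0 1 V β \ coneH d 0 θ β ⊆ coneX d 0 1 V β' \ coneH d 0 θ β' := by
  rintro y ⟨⟨hball, hX⟩, hH⟩
  simp only [coneX, coneH, mem_setOf_eq, sub_zero, not_le, mem_diff] at *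
  have hn : (0:ℝ) ≤ ‖y‖ := norm_nonneg y
  have hb : β * ‖y‖ ≤ β' * ‖y‖ := mul_le_mul_of_nonneg_right h hn
  exact ⟨⟨hball, lt_of_lt_of_le hX hb⟩, lt_of_lt_of_le hH hb⟩

/-- Key comparison: a slightly smaller cone for nearby parameters is contained in the
bigger cone for perturbed parameters. -/
lemma cone_perturb {d m : ℕ} {α η η' : ℝ} (hα0 : 0 < α) (hα1 : α ≤ 1)
    (hη0 : 0 < η) (hηη' : η < η') (hη'1 : η' ≤ 1)
    {f f' : Fin m → EuclideanSpace ℝ (Fin d)} {θ θ' : EuclideanSpace ℝ (Fin d)}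
    (hf : Orthonormal ℝ f)
    (hff' : ∀ j, ‖f' j - f j‖ ≤ (η' - η) * α / (2 * m + 1))
    (hθθ' : ‖θ' - θ‖ ≤ (η' - η) * α / (2 * m + 1)) :
    coneX d 0 1 (Submodule.span ℝ (Set.range f)) (η * α) \ coneH d 0 θ (η * α)
      ⊆ coneX d 0 1 (Submodule.span ℝ (Set.range f')) (η' * α) \ coneH d 0 θ' (η' * α) := by
  obtain ⟨δ, hδdef⟩ : ∃ δ : ℝ, δ = (η' - η) * α / (2 * m + 1) := ⟨_, rfl⟩
  rw [← hδdef] at hff' hθθ'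
  have hm1 : (0:ℝ) < 2 * m + 1 := by positivity
  have hδ0 : 0 ≤ δ := by
    rw [hδdef]
    have h := sub_pos.mpr hηη'
    positivity
  rintro y ⟨⟨hball, hX⟩, hH⟩
  simp only [coneX, coneH, mem_setOf_eq, sub_zero, not_le, mem_diff, mem_ball,
    dist_zero_right] at *
  have hy0 : 0 < ‖y‖ := by
    by_contra h
    push_neg at h
    have : ‖y‖ = 0 := le_antisymm h (norm_nonneg y)
    rw [this, mul_zero] at hX
    exact absurd hX (not_lt.mpr Metric.infDist_nonneg)
  -- find a good approximant v in span f
  have hne : (Submodule.span ℝ (Set.range f) : Set (EuclideanSpace ℝ (Fin d))).Nonempty :=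
    ⟨0, Submodule.zero_mem _⟩
  obtain ⟨v, hvmem, hvd⟩ := (Metric.infDist_lt_iff hne).mp hX
  obtain ⟨c, hc⟩ := (Submodule.mem_span_range_iff_exists_fun ℝ).mp hvmem
  have hηα1 : η * α ≤ 1 := by
    have : η ≤ 1 := le_of_lt (lt_of_lt_of_le hηη' hη'1)
    calc η * α ≤ 1 * 1 := mul_le_mul this hα1 hα0.le zero_le_one
    _ = 1 := one_mul 1
  have hvnorm : ‖v‖ ≤ 2 * ‖y‖ := by
    have : ‖v‖ ≤ ‖y‖ + dist y v := by
      rw [dist_eq_norm]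
      calc ‖v‖ = ‖y - (y - v)‖ := by rw [sub_sub_cancel]
      _ ≤ ‖y‖ + ‖y - v‖ := norm_sub_le _ _
    have h2 : dist y v ≤ ‖y‖ := le_trans hvd.le (by nlinarith)
    linarith
  have hcbound : ∀ j, |c j| ≤ 2 * ‖y‖ := by
    intro j
    have h1 : ⟪f j, v⟫ = c j := by rw [← hc]; exact hf.inner_right_fintype c j
    calc |c j| = |⟪f j, v⟫| := by rw [h1]
    _ ≤ ‖f j‖ * ‖v‖ := abs_real_inner_le_norm _ _
    _ = ‖v‖ := by rw [hf.1 j, one_mul]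
    _ ≤ 2 * ‖y‖ := hvnorm
  set v' : EuclideanSpace ℝ (Fin d) := ∑ j, c j • f' j with hv'
  have hv'mem : v' ∈ Submodule.span ℝ (Set.range f') :=
    Submodule.sum_mem _ fun j _ => Submodule.smul_mem _ _
      (Submodule.subset_span (Set.mem_range_self j))
  have hvv' : ‖v - v'‖ ≤ 2 * m * ‖y‖ * δ := by
    have : v - v' = ∑ j, c j • (f j - f' j) := by
      rw [← hc, hv', ← Finset.sum_sub_distrib]
      congr 1; ext j; rw [smul_sub]
    rw [this]
    calc ‖∑ j, c j • (f j - f' j)‖ ≤ ∑ j, ‖c j • (f j - f' j)‖ := norm_sum_le _ _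
    _ ≤ ∑ _j : Fin m, 2 * ‖y‖ * δ := by
        apply Finset.sum_le_sum
        intro j _
        rw [norm_smul, Real.norm_eq_abs]
        have h1 := hcbound j
        have h2 : ‖f j - f' j‖ ≤ δ := by rw [norm_sub_rev]; exact hff' j
        have := mul_le_mul h1 h2 (norm_nonneg _) (by positivity)
        linarith
    _ = 2 * m * ‖y‖ * δ := by
        rw [Finset.sum_const, Finset.card_univ, Fintype.card_fin, nsmul_eq_mul]; ring
  have hδkey : (2 * m + 1) * δ ≤ (η' - η) * α := by
    rw [hδdef, mul_div_cancel₀ _ hm1.ne']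
  constructor
  · refine ⟨hball, ?_⟩
    calc Metric.infDist y (Submodule.span ℝ (Set.range f') : Set (EuclideanSpace ℝ (Fin d)))
        ≤ dist y v' := Metric.infDist_le_dist_of_mem hv'mem
    _ ≤ dist y v + ‖v - v'‖ := by rw [dist_eq_norm, dist_eq_norm]; exact norm_sub_le_norm_sub_add_norm_sub y v v'
    _ < η * α * ‖y‖ + 2 * m * ‖y‖ * δ := by linarith [hvv']
    _ ≤ η' * α * ‖y‖ := by nlinarith [hy0, hδ0, hδkey] 
  · calc ⟪y, θ'⟫ = ⟪y, θ⟫ + ⟪y, θ' - θ⟫ := by rw [inner_sub_right]; ring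
    _ ≤ ⟪y, θ⟫ + ‖y‖ * δ := by
        have := real_inner_le_norm y (θ' - θ)
        nlinarith [norm_nonneg y, hθθ']
    _ < η * α * ‖y‖ + ‖y‖ * δ := by linarith
    _ ≤ η' * α * ‖y‖ := by
        have h2m : (0:ℝ) ≤ 2 * m := by positivity
        nlinarith [hy0, hδ0, hδkey, mul_nonneg h2m hδ0]

/-- Open cones exhaust the cone difference. -/
lemma coneDiff_eq_iUnion {d : ℕ} (V : Submodule ℝ (EuclideanSpace ℝ (Fin d)))
    (θ : EuclideanSpace ℝ (Fin d)) {α : ℝ} (hα0 : 0 < α) :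
    coneX d 0 1 V α \ coneH d 0 θ α
      = ⋃ n : ℕ, (coneX d 0 1 V ((1 - 1/(n+2)) * α) \ coneH d 0 θ ((1 - 1/(n+2)) * α)) := by
  apply Set.Subset.antisymm
  · rintro y ⟨⟨hball, hX⟩, hH⟩
    simp only [coneX, coneH, mem_setOf_eq, sub_zero, mem_ball, dist_zero_right, not_le] at hball hX hH
    have hy0 : 0 < ‖y‖ := by
      have h1 : (0:ℝ) < α * ‖y‖ := lt_of_le_of_lt Metric.infDist_nonneg hX
      nlinarith [norm_nonneg y]
    have hαy : 0 < α * ‖y‖ := by positivity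
    set t := max (Metric.infDist y (V : Set (EuclideanSpace ℝ (Fin d)))) ⟪y, θ⟫ with htdef
    have ht : t < α * ‖y‖ := max_lt hX hH
    obtain ⟨n, hn⟩ := exists_nat_one_div_lt (div_pos (sub_pos.mpr ht) hαy)
    have h12 : 1/((n:ℝ)+2) ≤ 1/((n:ℝ)+1) :=
      one_div_le_one_div_of_le (by positivity) (by linarith)
    have hkey : t < (1 - 1/((n:ℝ)+2)) * α * ‖y‖ := by
      have h2 : (1/((n:ℝ)+1)) * (α * ‖y‖) < α * ‖y‖ - t := by
        have := (lt_div_iff₀ hαy).mp hn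
        linarith
      have h3 : (1/((n:ℝ)+2)) * (α*‖y‖) ≤ (1/((n:ℝ)+1)) * (α*‖y‖) :=
        mul_le_mul_of_nonneg_right h12 hαy.le
      nlinarith
    refine Set.mem_iUnion.mpr ⟨n, ⟨⟨?_, ?_⟩, ?_⟩⟩
    · simpa [mem_ball, dist_zero_right, sub_zero] using hball
    · simp only [mem_setOf_eq, sub_zero]
      calc Metric.infDist y (V : Set (EuclideanSpace ℝ (Fin d))) ≤ t := le_max_left _ _
      _ < (1 - 1/((n:ℝ)+2)) * α * ‖y‖ := hkey
    · simp only [coneH, mem_setOf_eq, sub_zero, not_le]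
      calc ⟪y, θ⟫ ≤ t := le_max_right _ _
      _ < (1 - 1/((n:ℝ)+2)) * α * ‖y‖ := hkey
  · apply Set.iUnion_subset
    intro n
    apply coneDiff_mono
    have h1 : (0:ℝ) < 1/((n:ℝ)+2) := by positivity
    nlinarith

/-- The cone difference is open. -/
lemma coneDiff_isOpen {d : ℕ} (V : Submodule ℝ (EuclideanSpace ℝ (Fin d)))
    (θ : EuclideanSpace ℝ (Fin d)) (β : ℝ) :
    IsOpen (coneX d 0 1 V β \ coneH d 0 θ β) := by
  have hc1 : Continuous fun y : EuclideanSpace ℝ (Fin d) =>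
      Metric.infDist (y - 0) (V : Set (EuclideanSpace ℝ (Fin d))) :=
    (continuous_infDist_pt _).comp (continuous_id.sub continuous_const)
  have hc2 : Continuous fun y : EuclideanSpace ℝ (Fin d) => β * ‖y - 0‖ :=
    continuous_const.mul ((continuous_id.sub continuous_const).norm)
  apply IsOpen.sdiff
  · have heq : coneX d 0 1 V β = Metric.ball (0 : EuclideanSpace ℝ (Fin d)) 1 ∩
        {y | Metric.infDist (y - 0) (V : Set (EuclideanSpace ℝ (Fin d))) < β * ‖y - 0‖} := rfl
    rw [heq]
    exact isOpen_ball.inter (isOpen_lt hc1 hc2)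
  · exact isClosed_le hc2 ((continuous_id.sub continuous_const).inner continuous_const)

/-- Parameter space: orthonormal frames together with a unit vector. -/
def goodParams (d m : ℕ) :
    Set ((Fin m → EuclideanSpace ℝ (Fin d)) × EuclideanSpace ℝ (Fin d)) :=
  {q | Orthonormal ℝ q.1 ∧ ‖q.2‖ = 1}

lemma goodParams_isCompact (d m : ℕ) : IsCompact (goodParams d m) := by
  classical
  apply IsCompact.of_isClosed_subset
    ((isCompact_closedBall (0 : Fin m → EuclideanSpace ℝ (Fin d)) 1).prod
      (isCompact_closedBall (0 : EuclideanSpace ℝ (Fin d)) 1))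
  · have h1 : IsClosed {q : (Fin m → EuclideanSpace ℝ (Fin d)) × EuclideanSpace ℝ (Fin d) |
        Orthonormal ℝ q.1} := by
      have heq : {q : (Fin m → EuclideanSpace ℝ (Fin d)) × EuclideanSpace ℝ (Fin d) |
          Orthonormal ℝ q.1} = ⋂ i, ⋂ j,
          {q : (Fin m → EuclideanSpace ℝ (Fin d)) × EuclideanSpace ℝ (Fin d) |
            ⟪q.1 i, q.1 j⟫ = if i = j then (1:ℝ) else 0} := by
        ext q
        simp [orthonormal_iff_ite]
      rw [heq]
      exact isClosed_iInter fun i => isClosed_iInter fun j =>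
        isClosed_eq (Continuous.inner ((continuous_apply i).comp continuous_fst)
          ((continuous_apply j).comp continuous_fst)) continuous_const
    have h2 : IsClosed {q : (Fin m → EuclideanSpace ℝ (Fin d)) × EuclideanSpace ℝ (Fin d) |
        ‖q.2‖ = 1} := isClosed_eq (continuous_norm.comp continuous_snd) continuous_const
    exact h1.inter h2
  · rintro ⟨f, θ⟩ ⟨hf, hθ⟩
    refine ⟨?_, ?_⟩
    · rw [mem_closedBall_zero_iff, pi_norm_le_iff_of_nonneg zero_le_one]
      exact fun i => le_of_eq (hf.1 i)
    · rw [mem_closedBall_zero_iff]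
      exact le_of_eq hθ

/-- The pulled-back open cone set on the closed unit ball. -/
def cSet (d m : ℕ) (α η : ℝ)
    (q : (Fin m → EuclideanSpace ℝ (Fin d)) × EuclideanSpace ℝ (Fin d)) :
    Set ↥(Metric.closedBall (0 : EuclideanSpace ℝ (Fin d)) 1) :=
  Subtype.val ⁻¹' (coneX d 0 1 (Submodule.span ℝ (Set.range q.1)) (η * α)
    \ coneH d 0 q.2 (η * α))

lemma cSet_isOpen (d m : ℕ) (α η : ℝ)
    (q : (Fin m → EuclideanSpace ℝ (Fin d)) × EuclideanSpace ℝ (Fin d)) :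
    IsOpen (cSet d m α η q) :=
  (coneDiff_isOpen _ _ _).preimage continuous_subtype_val

abbrev Pm (d m : ℕ) := (Fin m → EuclideanSpace ℝ (Fin d)) × EuclideanSpace ℝ (Fin d)

abbrev UBall (d : ℕ) := ↥(Metric.closedBall (0 : EuclideanSpace ℝ (Fin d)) 1)

lemma sClosed (d m : ℕ) (α : ℝ) (hα0 : 0 < α) (hα1 : α ≤ 1) (ε : ℝ) :
    IsClosed {x : ↥(goodParams d m) × ProbabilityMeasure (UBall d) |
      ∀ η : ℝ, 0 < η → η < 1 →
        (x.2 : Measure (UBall d)) (cSet d m α η (x.1 : Pm d m)) ≤ ENNReal.ofReal ε} := by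
  set S := {x : ↥(goodParams d m) × ProbabilityMeasure (UBall d) |
    ∀ η : ℝ, 0 < η → η < 1 →
      (x.2 : Measure (UBall d)) (cSet d m α η (x.1 : Pm d m)) ≤ ENNReal.ofReal ε} with hSdef
  apply isClosed_of_closure_subset
  intro x hx η hη0 hη1
  have hL : (𝓝 x ⊓ 𝓟 S).NeBot := mem_closure_iff_clusterPt.mp hx
  set L := 𝓝 x ⊓ 𝓟 S with hLdef
  set η' : ℝ := (1 + η)/2 with hη'def
  have hηη' : η < η' := by rw [hη'def]; linarith
  have hη'1 : η' < 1 := by rw [hη'def]; linarith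
  have hη'0 : 0 < η' := by rw [hη'def]; linarith
  set δ : ℝ := (η' - η) * α / (2 * m + 1) with hδdef
  have hδ0 : 0 < δ := by
    rw [hδdef]
    have h := sub_pos.mpr hηη'
    positivity
  have hid : Tendsto (fun y : ↥(goodParams d m) × ProbabilityMeasure (UBall d) => y)
      L (𝓝 x) := tendsto_id.mono_left inf_le_left
  have htq : Tendsto (fun y : ↥(goodParams d m) × ProbabilityMeasure (UBall d) =>
      (y.1 : Pm d m)) L (𝓝 (x.1 : Pm d m)) :=
    ((continuous_subtype_val.comp continuous_fst).tendsto x).comp hid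
  have htm : Tendsto (fun y : ↥(goodParams d m) × ProbabilityMeasure (UBall d) => y.2)
      L (𝓝 x.2) := (continuous_snd.tendsto x).comp hid
  have hS : ∀ᶠ y in L, y ∈ S :=
    Filter.eventually_inf_principal.mpr (Filter.Eventually.of_forall fun y hy => hy)
  have hcl : ∀ᶠ y in L, dist (y.1 : Pm d m) (x.1 : Pm d m) < δ :=
    Metric.tendsto_nhds.mp htq δ hδ0
  have hev : ∀ᶠ y in L,
      (y.2 : Measure (UBall d)) (cSet d m α η (x.1 : Pm d m)) ≤ ENNReal.ofReal ε := by
    filter_upwards [hS, hcl] with y hyS hyd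
    have hsub : cSet d m α η (x.1 : Pm d m) ⊆ cSet d m α η' (y.1 : Pm d m) := by
      apply Set.preimage_mono
      refine cone_perturb hα0 hα1 hη0 hηη' hη'1.le x.1.2.1 ?_ ?_
      · intro j
        have h1 : dist ((y.1 : Pm d m).1 j) ((x.1 : Pm d m).1 j)
            ≤ dist (y.1 : Pm d m).1 (x.1 : Pm d m).1 := dist_le_pi_dist _ _ j
        have h2 : dist (y.1 : Pm d m).1 (x.1 : Pm d m).1
            ≤ dist (y.1 : Pm d m) (x.1 : Pm d m) := by
          rw [Prod.dist_eq]; exact le_max_left _ _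
        rw [← dist_eq_norm]
        exact le_of_lt (lt_of_le_of_lt (le_trans h1 h2) hyd)
      · have h2 : dist (y.1 : Pm d m).2 (x.1 : Pm d m).2
            ≤ dist (y.1 : Pm d m) (x.1 : Pm d m) := by
          rw [Prod.dist_eq]; exact le_max_right _ _
        rw [← dist_eq_norm]
        exact le_of_lt (lt_of_le_of_lt h2 hyd)
    exact le_trans (measure_mono hsub) (hyS η' hη'0 hη'1)
  have hport := MeasureTheory.ProbabilityMeasure.le_liminf_measure_open_of_tendsto htm
    (cSet_isOpen d m α η (x.1 : Pm d m))
  exact le_trans hport (Filter.liminf_le_of_frequently_le' hev.frequently)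

/-- The set `A_ε` of probability measures on the closed unit ball having mass at most `ε`
in some cone `X(0,1,V,α) \ H(0,θ,α)` with `V ∈ G(d,d-k)` and `θ ∈ S^{d-1}` is closed
in the topology of weak convergence. -/
theorem coneMassLE_isClosed (d k : ℕ) (hd : 1 ≤ d) (hk1 : 1 ≤ k) (hk2 : k ≤ d - 1)
    (α : ℝ) (hα0 : 0 < α) (hα1 : α ≤ 1) (ε : ℝ) (hε : 0 ≤ ε) :
    IsClosed {ν : ProbabilityMeasure ↥(Metric.closedBall (0 : EuclideanSpace ℝ (Fin d)) 1) |
      ∃ (V : Submodule ℝ (EuclideanSpace ℝ (Fin d))) (θ : EuclideanSpace ℝ (Fin d)),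
        Module.finrank ℝ V = d - k ∧ ‖θ‖ = 1 ∧
        ν.toMeasure (Subtype.val ⁻¹' (coneX d 0 1 V α \ coneH d 0 θ α)) ≤ ENNReal.ofReal ε} := by
  classical
  set m := d - k with hm
  haveI : CompactSpace ↥(goodParams d m) :=
    isCompact_iff_compactSpace.mp (goodParams_isCompact d m)
  set S := {x : ↥(goodParams d m) × ProbabilityMeasure (UBall d) |
    ∀ η : ℝ, 0 < η → η < 1 →
      (x.2 : Measure (UBall d)) (cSet d m α η (x.1 : Pm d m)) ≤ ENNReal.ofReal ε} with hSdef
  have hSclosed : IsClosed S := sClosed d m α hα0 hα1 ε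
  have heq : {ν : ProbabilityMeasure (UBall d) |
      ∃ (V : Submodule ℝ (EuclideanSpace ℝ (Fin d))) (θ : EuclideanSpace ℝ (Fin d)),
        Module.finrank ℝ V = d - k ∧ ‖θ‖ = 1 ∧
        ν.toMeasure (Subtype.val ⁻¹' (coneX d 0 1 V α \ coneH d 0 θ α)) ≤ ENNReal.ofReal ε}
      = Prod.snd '' S := by
    ext ν
    constructor
    · rintro ⟨V, θ, hV, hθ, hmeas⟩
      let b : OrthonormalBasis (Fin m) ℝ V :=
        (stdOrthonormalBasis ℝ V).reindex (finCongr (by rw [hV]))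
      let f : Fin m → EuclideanSpace ℝ (Fin d) := fun j => (b j : EuclideanSpace ℝ (Fin d))
      have hforth : Orthonormal ℝ f := by
        rw [orthonormal_iff_ite]
        intro i j
        have h := orthonormal_iff_ite.mp b.orthonormal i j
        rw [Submodule.coe_inner] at h
        exact h
      have hspan : Submodule.span ℝ (Set.range f) = V := by
        have h1 : Set.range f = (V.subtype) '' (Set.range b) := by
          rw [← Set.range_comp]; rfl
        rw [h1, Submodule.span_image]
        have h2 : Submodule.span ℝ (Set.range ⇑b) = ⊤ := by
          rw [← b.coe_toBasis]; exact b.toBasis.span_eq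
        rw [h2]
        exact Submodule.map_subtype_top V
      refine ⟨⟨⟨(f, θ), hforth, hθ⟩, ν⟩, ?_, rfl⟩
      intro η hη0 hη1
      have hsub : cSet d m α η ((f, θ) : Pm d m)
          ⊆ Subtype.val ⁻¹' (coneX d 0 1 V α \ coneH d 0 θ α) := by
        apply Set.preimage_mono
        have : Submodule.span ℝ (Set.range ((f, θ) : Pm d m).1) = V := hspan
        rw [show ((f, θ) : Pm d m).1 = f from rfl, show ((f, θ) : Pm d m).2 = θ from rfl, hspan]
        have hb : η * α ≤ α := by nlinarith
        exact coneDiff_mono hb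
      exact le_trans (measure_mono hsub) hmeas
    · rintro ⟨x, hxS, rfl⟩
      obtain ⟨⟨q, hq⟩, μ⟩ := x
      refine ⟨Submodule.span ℝ (Set.range q.1), q.2, ?_, hq.2, ?_⟩
      · rw [finrank_span_eq_card hq.1.linearIndependent]
        simp [hm]
      · have hUeq := coneDiff_eq_iUnion (Submodule.span ℝ (Set.range q.1)) q.2 hα0
        show (μ : Measure (UBall d)) _ ≤ _
        rw [hUeq, Set.preimage_iUnion]
        have hdir : Directed (· ⊆ ·) fun n : ℕ =>
            (Subtype.val ⁻¹' (coneX d 0 1 (Submodule.span ℝ (Set.range q.1))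
              ((1 - 1/(n+2)) * α) \ coneH d 0 q.2 ((1 - 1/(n+2)) * α))
              : Set (UBall d)) := by
          apply Monotone.directed_le
          intro n n' hnn'
          apply Set.preimage_mono
          apply coneDiff_mono
          have h1 : 1/((n':ℝ)+2) ≤ 1/((n:ℝ)+2) := by
            apply one_div_le_one_div_of_le (by positivity)
            have : (n:ℝ) ≤ n' := Nat.cast_le.mpr hnn'
            linarith
          nlinarith
        rw [Directed.measure_iUnion hdir]
        apply iSup_le
        intro n
        have hη0 : 0 < 1 - 1/((n:ℝ)+2) := by
          have h1 : 1/((n:ℝ)+2) ≤ 1/2 := by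
            apply one_div_le_one_div_of_le (by norm_num)
            have : (0:ℝ) ≤ n := Nat.cast_nonneg n
            linarith
          linarith
        have hη1 : 1 - 1/((n:ℝ)+2) < 1 := by
          have h1 : (0:ℝ) < 1/((n:ℝ)+2) := by positivity
          linarith
        exact hxS (1 - 1/((n:ℝ)+2)) hη0 hη1
  rw [heq]
  exact isClosedMap_snd_of_compactSpace S hSclosed
end
end

section
/- Fix d ≥ 1 and 0 < α ≤ 1/2 and ε ≥ 0. The set A_ε of Borel probability measures ν on the closed unit ball B̄(0,1) ⊂ ℝ^d such that there exists y ∈ B̄(0,1-α) with ν(B(y,α)) ≤ ε (B(y,α) the open ball) is closed with respect to weak convergence. -/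
open MeasureTheory Metric Set
open scoped ENNReal NNReal

noncomputable section

/-- The set `A_ε` of probability measures on the closed unit ball of `ℝ^d` having a hole:
an open ball `B(y,α)` with `y ∈ B̄(0,1-α)` of mass at most `ε`. This set is closed in the
topology of weak convergence. -/
theorem porousHole_isClosed (d : ℕ) (hd : 1 ≤ d)
    (α : ℝ) (hα0 : 0 < α) (hα1 : α ≤ 1/2) (ε : ℝ) (hε : 0 ≤ ε) :
    IsClosed {ν : ProbabilityMeasure ↥(Metric.closedBall (0 : EuclideanSpace ℝ (Fin d)) 1) |
      ∃ y ∈ Metric.closedBall (0 : EuclideanSpace ℝ (Fin d)) (1 - α),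
        ν.toMeasure (Subtype.val ⁻¹' Metric.ball y α) ≤ ENNReal.ofReal ε} := by
  apply IsSeqClosed.isClosed
  intro νs ν hmem hlim
  choose y hyK hyε using hmem
  obtain ⟨y₀, hy₀K, φ, hφ, hφlim⟩ :=
    (isCompact_closedBall (0 : EuclideanSpace ℝ (Fin d)) (1 - α)).tendsto_subseq hyK
  refine ⟨y₀, hy₀K, ?_⟩
  have hνlim : Filter.Tendsto (fun i => νs (φ i)) Filter.atTop (nhds ν) :=
    hlim.comp hφ.tendsto_atTop
  -- the sets approximating the open ball from inside
  set s : ℕ → Set ↥(Metric.closedBall (0 : EuclideanSpace ℝ (Fin d)) 1) :=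
    fun n => Subtype.val ⁻¹' Metric.ball y₀ (α - α / (n + 1)) with hs
  have hpos : ∀ n : ℕ, 0 < α / (n + 1 : ℝ) := by
    intro n
    positivity
  have hUnion : ⋃ n, s n = Subtype.val ⁻¹' Metric.ball y₀ α := by
    ext x
    simp only [hs, mem_iUnion, mem_preimage, Metric.mem_ball]
    constructor
    · rintro ⟨n, hn⟩
      exact hn.trans_le (by linarith [hpos n])
    · intro hx
      obtain ⟨n, hn⟩ := exists_nat_gt (α / (α - dist (x : EuclideanSpace ℝ (Fin d)) y₀))
      refine ⟨n, ?_⟩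
      have hαd : 0 < α - dist (x : EuclideanSpace ℝ (Fin d)) y₀ := by linarith
      have : α / (n + 1 : ℝ) < α - dist (x : EuclideanSpace ℝ (Fin d)) y₀ := by
        rw [div_lt_iff₀ (by positivity)]
        have h1 : α / (α - dist (x : EuclideanSpace ℝ (Fin d)) y₀) < (n : ℝ) + 1 := by
          linarith
        calc α = (α / (α - dist (x : EuclideanSpace ℝ (Fin d)) y₀)) *
            (α - dist (x : EuclideanSpace ℝ (Fin d)) y₀) := by
              field_simp
          _ < ((n : ℝ) + 1) * (α - dist (x : EuclideanSpace ℝ (Fin d)) y₀) := by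
              exact mul_lt_mul_of_pos_right h1 hαd
          _ = (α - dist (x : EuclideanSpace ℝ (Fin d)) y₀) * ((n : ℝ) + 1) := by ring
      linarith
  have hmono : Monotone s := by
    intro m n hmn x hx
    simp only [hs, mem_preimage, Metric.mem_ball] at hx ⊢
    have : α / (n + 1 : ℝ) ≤ α / (m + 1 : ℝ) := by
      apply div_le_div_of_nonneg_left hα0.le (by positivity)
      have : (m : ℝ) ≤ (n : ℝ) := Nat.cast_le.mpr hmn
      linarith
    linarith
  rw [← hUnion, hmono.directed_le.measure_iUnion]
  refine iSup_le fun n => ?_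
  -- for each n, portmanteau plus eventual inclusion of balls
  have hopen : IsOpen (s n) := (Metric.isOpen_ball).preimage continuous_subtype_val
  have hport := MeasureTheory.ProbabilityMeasure.le_liminf_measure_open_of_tendsto hνlim hopen
  refine hport.trans ?_
  apply Filter.liminf_le_of_frequently_le'
  apply Filter.Eventually.frequently
  have hclose : ∀ᶠ i in Filter.atTop, dist (y (φ i)) y₀ < α / (n + 1 : ℝ) :=
    (Metric.tendsto_nhds.mp hφlim) _ (hpos n)
  filter_upwards [hclose] with i hi
  have hsub : s n ⊆ Subtype.val ⁻¹' Metric.ball (y (φ i)) α := by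
    intro x hx
    simp only [hs, mem_preimage, Metric.mem_ball] at hx ⊢
    calc dist (x : EuclideanSpace ℝ (Fin d)) (y (φ i))
        ≤ dist (x : EuclideanSpace ℝ (Fin d)) y₀ + dist y₀ (y (φ i)) := dist_triangle _ _ _
      _ < (α - α / (n + 1)) + α / (n + 1) := by
          rw [dist_comm y₀]
          exact add_lt_add hx hi
      _ = α := by ring
  exact (measure_mono hsub).trans (hyε (φ i))
end
end

section
/- Fix d ≥ 1, 0 < α,ϱ ≤ 1, c = (1+ϱ)^{-1}, and ε ≥ 0. The set A°_ε of Borel probability measures ν on the closed unit ball B̄(0,1) ⊂ ℝ^d such that there exists y in the closed annulus A(0,c,1) = B̄(0,1)\B(0,c) with ν(B(y, αϱ|y|)) ≤ ε, is closed with respect to weak convergence. -/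
open MeasureTheory Metric Set Filter
open scoped ENNReal NNReal

noncomputable section

/-- The set `A°_ε` of probability measures on the closed unit ball of `ℝ^d` having an annular
hole: an open ball `B(y, αϱ|y|)` centered at a point `y` of the closed annulus
`A(0,c,1) = B̄(0,1) \ B(0,c)`, `c = (1+ϱ)⁻¹`, with mass at most `ε`. This set is closed
in the topology of weak convergence. -/
theorem annularHole_isClosed (d : ℕ) (hd : 1 ≤ d)
    (α ϱ : ℝ) (hα0 : 0 < α) (hα1 : α ≤ 1) (hϱ0 : 0 < ϱ) (hϱ1 : ϱ ≤ 1) (ε : ℝ) (hε : 0 ≤ ε) :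
    IsClosed {ν : ProbabilityMeasure ↥(Metric.closedBall (0 : EuclideanSpace ℝ (Fin d)) 1) |
      ∃ y ∈ Metric.closedBall (0 : EuclideanSpace ℝ (Fin d)) 1 \
            Metric.ball (0 : EuclideanSpace ℝ (Fin d)) (1 + ϱ)⁻¹,
        ν.toMeasure (Subtype.val ⁻¹' Metric.ball y (α * ϱ * ‖y‖)) ≤ ENNReal.ofReal ε} := by
  set E := EuclideanSpace ℝ (Fin d)
  haveI : CompactSpace ↥(Metric.closedBall (0 : E) 1) :=
    isCompact_iff_compactSpace.mp (isCompact_closedBall 0 1)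
  apply IsSeqClosed.isClosed
  intro νs ν hmem hlim
  choose y hy hby using hmem
  have hAcomp : IsCompact (Metric.closedBall (0 : E) 1 \ Metric.ball 0 (1 + ϱ)⁻¹) :=
    (isCompact_closedBall 0 1).diff isOpen_ball
  obtain ⟨z, hz, φ, hφ, hyz⟩ := hAcomp.tendsto_subseq hy
  refine ⟨z, hz, ?_⟩
  -- positivity of ‖z‖
  have hz_norm : (1 + ϱ)⁻¹ ≤ ‖z‖ := by
    have := hz.2
    simpa [Metric.mem_ball, dist_zero_right, not_lt] using this
  have hz_pos : 0 < ‖z‖ :=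
    lt_of_lt_of_le (inv_pos.mpr (by linarith)) hz_norm
  set r : ℝ := α * ϱ * ‖z‖ with hr
  have hr_pos : 0 < r := by positivity
  -- r as a monotone union
  have hball : Metric.ball z r = ⋃ k : ℕ, Metric.ball z (r - 1 / (k + 1)) := by
    ext x
    simp only [Metric.mem_ball, mem_iUnion]
    constructor
    · intro hx
      obtain ⟨k, hk⟩ := exists_nat_one_div_lt (show 0 < r - dist x z by linarith)
      exact ⟨k, by linarith⟩
    · rintro ⟨k, hk⟩
      have : (0:ℝ) < 1 / (k + 1) := by positivity
      linarith
  have hmono : Monotone fun k : ℕ => (Subtype.val ⁻¹'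
      Metric.ball z (r - 1 / (k + 1)) : Set ↥(Metric.closedBall (0 : E) 1)) := by
    intro a b hab
    apply preimage_mono
    apply Metric.ball_subset_ball
    have : (1:ℝ) / (b + 1) ≤ 1 / (a + 1) := by
      apply one_div_le_one_div_of_le (by positivity)
      exact_mod_cast by omega
    linarith
  rw [show Subtype.val ⁻¹' Metric.ball z (α * ϱ * ‖z‖) =
      ⋃ k : ℕ, Subtype.val ⁻¹' Metric.ball z (r - 1 / (k + 1)) by
    rw [← preimage_iUnion, ← hball]]
  rw [hmono.directed_le.measure_iUnion]
  refine iSup_le fun k => ?_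
  -- fixed smaller radius s
  set s : ℝ := r - 1 / (k + 1) with hs
  set G : Set ↥(Metric.closedBall (0 : E) 1) := Subtype.val ⁻¹' Metric.ball z s with hG
  have hGopen : IsOpen G := isOpen_ball.preimage continuous_subtype_val
  have hlim' : Tendsto (fun n => νs (φ n)) atTop (nhds ν) :=
    hlim.comp hφ.tendsto_atTop
  have hport := MeasureTheory.ProbabilityMeasure.le_liminf_measure_open_of_tendsto hlim' hGopen
  refine le_trans hport ?_
  apply Filter.liminf_le_of_frequently_le'
  apply Filter.Eventually.frequently
  -- eventual inclusion
  set δ : ℝ := 1 / ((k + 1) * (1 + α * ϱ) * 2) with hδ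
  have hδ_pos : 0 < δ := by positivity
  have hδ_key : δ * (1 + α * ϱ) ≤ 1 / (k + 1) := by
    rw [hδ]
    rw [div_mul_eq_mul_div, one_mul]
    rw [div_le_div_iff₀ (by positivity) (by positivity)]
    have h1 : (0:ℝ) < 1 + α * ϱ := by positivity
    have h2 : (0:ℝ) < (k:ℝ) + 1 := by positivity
    nlinarith
  have hev : ∀ᶠ n in atTop, dist (y (φ n)) z < δ :=
    (tendsto_iff_dist_tendsto_zero.mp hyz).eventually_lt_const hδ_pos |>.mono
      (fun n h => by simpa using h)
  filter_upwards [hev] with n hn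
  have hincl : G ⊆ Subtype.val ⁻¹' Metric.ball (y (φ n)) (α * ϱ * ‖y (φ n)‖) := by
    intro x hx
    simp only [hG, mem_preimage, Metric.mem_ball] at hx ⊢
    have h1 : dist (x : E) (y (φ n)) ≤ dist (x : E) z + dist z (y (φ n)) :=
      dist_triangle _ _ _
    have h2 : dist z (y (φ n)) < δ := by rw [dist_comm]; exact hn
    have h3 : ‖z‖ - δ ≤ ‖y (φ n)‖ := by
      have := norm_sub_norm_le z (y (φ n))
      have h4 : ‖z - y (φ n)‖ = dist z (y (φ n)) := (dist_eq_norm _ _).symm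
      linarith
    have h5 : α * ϱ * (‖z‖ - δ) ≤ α * ϱ * ‖y (φ n)‖ := by
      apply mul_le_mul_of_nonneg_left h3 (by positivity)
    have h6 : α * ϱ ≤ 1 := by nlinarith
    calc dist (x : E) (y (φ n)) ≤ dist (x : E) z + dist z (y (φ n)) := h1
      _ < s + δ := by linarith
      _ ≤ α * ϱ * (‖z‖ - δ) := by
          have : δ * (1 + α * ϱ) ≤ r - s := by rw [hs]; linarith
          nlinarith [hr]
      _ ≤ α * ϱ * ‖y (φ n)‖ := h5
  calc (νs (φ n)).toMeasure G
      ≤ (νs (φ n)).toMeasure (Subtype.val ⁻¹' Metric.ball (y (φ n)) (α * ϱ * ‖y (φ n)‖)) :=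
        measure_mono hincl
    _ ≤ ENNReal.ofReal ε := hby (φ n)
end
end
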